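/- Let s ∈ (0,1), r ∈ [0,1], and for λ > 0 define ψ_{s,λ}(y) = ψ_s(√λ · y) for y > 0, where ψ_s(z) = (2^{1−s}/Γ(s)) z^s K_s(z). There exists a constant c > 0 depending only on s such that for every λ > 0, every y > 0, and every n ∈ ℕ with n ≥ 1, it holds |y^n ψ_{s,λ}^{(n)}(y)| ≤ c · 8^n · n! · λ^{s − r/2} · y^{2s−r}, where ψ_{s,λ}^{(n)} denotes the n-th derivative of ψ_{s,λ}. -/

import Mathlib

/-- The modified Bessel function of the second kind,
`K_ν(z) = ∫₀^∞ exp(−z cosh t) cosh(ν t) dt`. -/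
noncomputable def besselK (ν z : ℝ) : ℝ :=
  ∫ t in Set.Ioi (0:ℝ), Real.exp (-z * Real.cosh t) * Real.cosh (ν * t)

/-- `ψ_s(z) = (2^{1−s}/Γ(s)) z^s K_s(z)`. -/
noncomputable def psi (s z : ℝ) : ℝ :=
  (2 ^ (1 - s) / Real.Gamma s) * z ^ s * besselK s z

open Real MeasureTheory Set Filter Topology Metric

lemma half_exp_le_cosh (t : ℝ) : exp t / 2 ≤ cosh t := by
  rw [Real.cosh_eq]
  have := (exp_pos (-t)).le
  linarith

lemma cosh_lower (t : ℝ) (ht : 0 ≤ t) : 1/2 + exp t / 4 ≤ cosh t := by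
  rw [Real.cosh_eq, exp_neg, inv_eq_one_div]
  have h1 : (1:ℝ) ≤ exp t := one_le_exp ht
  have h0 : (0:ℝ) < exp t := exp_pos t
  have h2 : exp t * (1 / exp t) = 1 := by field_simp
  nlinarith [sq_nonneg (exp t - 1), mul_pos h0 h0]

lemma cosh_le_exp_abs (t : ℝ) : cosh t ≤ exp |t| := by
  rw [Real.cosh_eq]
  rcases le_total 0 t with h | h
  · rw [abs_of_nonneg h]
    have : exp (-t) ≤ exp t := exp_le_exp.2 (by linarith)
    linarith
  · rw [abs_of_nonpos h]
    have : exp t ≤ exp (-t) := exp_le_exp.2 (by linarith)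
    linarith

lemma abs_sinh_le_exp_abs (t : ℝ) : |sinh t| ≤ exp |t| := by
  rw [Real.abs_sinh, Real.sinh_eq]
  have := (exp_pos (-|t|)).le
  have := (exp_pos (|t|)).le
  linarith

lemma tendsto_linear_sub_exp (c : ℝ) {z : ℝ} (hz : 0 < z) :
    Tendsto (fun t => c * t - z * exp t) atTop atBot := by
  have h1 : Tendsto (fun t : ℝ => c * (t * exp (-t)) - z) atTop (𝓝 (c * 0 - z)) :=
    (tendsto_const_nhds.mul (by simpa using Real.tendsto_pow_mul_exp_neg_atTop_nhds_zero 1)).sub_const z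
  have h2 : Tendsto (fun t : ℝ => exp t * (c * (t * exp (-t)) - z)) atTop atBot := by
    apply Tendsto.atTop_mul_neg (by simpa : c * 0 - z < 0) tendsto_exp_atTop h1
  refine h2.congr' ?_
  filter_upwards [eventually_ge_atTop 0] with t _
  have h3 : exp t * exp (-t) = 1 := by rw [← Real.exp_add]; simp
  have h4 : exp t * (c * (t * exp (-t)) - z) = c * (t * (exp t * exp (-t))) - z * exp t := by ring
  rw [h4, h3, mul_one]

lemma integrableOn_exp_lin_sub_cosh {z : ℝ} (hz : 0 < z) (c : ℝ) :
    IntegrableOn (fun t => exp (c * t - z * cosh t)) (Ioi (0:ℝ)) := by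
  apply integrable_of_isBigO_exp_neg (a := 0) (b := 1) one_pos
  · exact (Real.continuous_exp.comp (by continuity)).continuousOn
  · -- eventual bound: c*t - z*cosh t ≤ -t
    have h := tendsto_linear_sub_exp (c + 1) (by positivity : 0 < z/2)
    rw [Asymptotics.isBigO_iff]
    refine ⟨1, ?_⟩
    filter_upwards [h.eventually (eventually_le_atBot 0), eventually_ge_atTop 0] with t h1 h2
    rw [one_mul, Real.norm_eq_abs, Real.norm_eq_abs, abs_of_nonneg (exp_pos _).le,
      abs_of_nonneg (exp_pos _).le, exp_le_exp]
    have h3 := half_exp_le_cosh t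
    nlinarith [exp_pos t]

/-- Comparison integrability: continuous functions dominated by the master bound. -/

lemma integrableOn_of_le_exp_lin_sub_cosh {f : ℝ → ℝ} {z : ℝ} (hz : 0 < z) (c A : ℝ)
    (hf : Continuous f) (hb : ∀ t ∈ Ioi (0:ℝ), |f t| ≤ A * exp (c * t - z * cosh t)) :
    IntegrableOn f (Ioi (0:ℝ)) := by
  refine Integrable.mono ((integrableOn_exp_lin_sub_cosh hz c).const_mul A)
    hf.aestronglyMeasurable.restrict ?_
  filter_upwards [ae_restrict_mem measurableSet_Ioi] with t ht
  rw [Real.norm_eq_abs, Real.norm_eq_abs]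
  exact (hb t ht).trans (le_abs_self _)

lemma besselK_integrand_integrable (ν : ℝ) {z : ℝ} (hz : 0 < z) :
    IntegrableOn (fun t => exp (-z * cosh t) * cosh (ν * t)) (Ioi (0:ℝ)) := by
  refine integrableOn_of_le_exp_lin_sub_cosh hz |ν| 1 (by continuity) (fun t ht => ?_)
  have ht' : 0 < t := ht
  have h1 : cosh (ν * t) ≤ exp (|ν| * t) := by
    have := cosh_le_exp_abs (ν * t)
    rwa [abs_mul, abs_of_nonneg ht'.le] at this
  rw [abs_of_nonneg (by positivity), one_mul, show |ν| * t - z * cosh t = -z * cosh t + |ν| * t by ring,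
    Real.exp_add]
  exact mul_le_mul_of_nonneg_left h1 (exp_pos _).le

lemma besselK_nonneg (ν : ℝ) (z : ℝ) : 0 ≤ besselK ν z := by
  apply setIntegral_nonneg measurableSet_Ioi
  intro t _
  positivity

/-- FTC identity. -/

lemma besselK_ftc_identity (μ : ℝ) {z : ℝ} (hz : 0 < z) :
    ∫ t in Ioi (0:ℝ), (μ * cosh (μ * t) - z * sinh t * sinh (μ * t)) * exp (-z * cosh t) = 0 := by
  have hderiv : ∀ t : ℝ, HasDerivAt (fun t => sinh (μ * t) * exp (-z * cosh t))
      ((μ * cosh (μ * t) - z * sinh t * sinh (μ * t)) * exp (-z * cosh t)) t := by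
    intro t
    have h1 : HasDerivAt (fun t : ℝ => sinh (μ * t)) (μ * cosh (μ * t)) t := by
      have := (Real.hasDerivAt_sinh (μ * t)).comp t ((hasDerivAt_id t).const_mul μ)
      simpa [mul_comm, Function.comp_def] using this
    have h2 : HasDerivAt (fun t : ℝ => exp (-z * cosh t)) (-z * sinh t * exp (-z * cosh t)) t := by
      have := (((Real.hasDerivAt_cosh t).const_mul (-z)).exp)
      simpa [mul_comm] using this
    have := h1.mul h2
    refine this.congr_deriv ?_
    ring
  have hint : IntegrableOn (fun t => (μ * cosh (μ * t) - z * sinh t * sinh (μ * t)) * exp (-z * cosh t)) (Ioi (0:ℝ)) := by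
    refine integrableOn_of_le_exp_lin_sub_cosh hz (1 + |μ|) (|μ| + z) (by continuity) (fun t ht => ?_)
    have ht' : (0:ℝ) < t := ht
    have hc : cosh (μ * t) ≤ exp (|μ| * t) := by
      have := cosh_le_exp_abs (μ * t); rwa [abs_mul, abs_of_nonneg ht'.le] at this
    have hs : |sinh (μ * t)| ≤ exp (|μ| * t) := by
      have := abs_sinh_le_exp_abs (μ * t); rwa [abs_mul, abs_of_nonneg ht'.le] at this
    have hst : |sinh t| ≤ exp t := by
      have := abs_sinh_le_exp_abs t; rwa [abs_of_nonneg ht'.le] at this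
    have hct : (0:ℝ) < cosh (μ * t) := Real.cosh_pos _
    rw [abs_mul, abs_of_nonneg (exp_pos _).le]
    have key : |μ * cosh (μ * t) - z * sinh t * sinh (μ * t)| ≤ (|μ| + z) * exp ((1 + |μ|) * t) := by
      refine (abs_sub _ _).trans ?_
      have e1 : |μ * cosh (μ * t)| ≤ |μ| * exp ((1 + |μ|) * t) := by
        rw [abs_mul, abs_of_nonneg hct.le]
        refine mul_le_mul_of_nonneg_left (hc.trans (exp_le_exp.2 ?_)) (abs_nonneg _)
        nlinarith
      have e2 : |z * sinh t * sinh (μ * t)| ≤ z * exp ((1 + |μ|) * t) := by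
        rw [abs_mul, abs_mul, abs_of_nonneg hz.le]
        rw [mul_assoc]
        refine mul_le_mul_of_nonneg_left ?_ hz.le
        calc |sinh t| * |sinh (μ * t)| ≤ exp t * exp (|μ| * t) :=
              mul_le_mul hst hs (abs_nonneg _) (exp_pos _).le
          _ = exp ((1 + |μ|) * t) := by rw [← Real.exp_add]; ring_nf
      nlinarith
    calc |μ * cosh (μ * t) - z * sinh t * sinh (μ * t)| * exp (-z * cosh t)
        ≤ (|μ| + z) * exp ((1 + |μ|) * t) * exp (-z * cosh t) := by
          refine mul_le_mul_of_nonneg_right key (exp_pos _).le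
      _ = (|μ| + z) * exp ((1 + |μ|) * t - z * cosh t) := by
          rw [mul_assoc, ← Real.exp_add]; ring_nf
  have htend : Tendsto (fun t => sinh (μ * t) * exp (-z * cosh t)) atTop (𝓝 0) := by
    refine squeeze_zero_norm' (a := fun t => exp (|μ| * t - (z/2) * exp t)) ?_ ?_
    · filter_upwards [eventually_ge_atTop 0] with t ht
      rw [Real.norm_eq_abs, abs_mul, abs_of_nonneg (exp_pos _).le]
      have hs : |sinh (μ * t)| ≤ exp (|μ| * t) := by
        have := abs_sinh_le_exp_abs (μ * t); rwa [abs_mul, abs_of_nonneg ht] at this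
      have h3 := half_exp_le_cosh t
      calc |sinh (μ * t)| * exp (-z * cosh t) ≤ exp (|μ| * t) * exp (-z * cosh t) :=
            mul_le_mul_of_nonneg_right hs (exp_pos _).le
        _ = exp (|μ| * t - z * cosh t) := by rw [← Real.exp_add]; ring_nf
        _ ≤ exp (|μ| * t - (z/2) * exp t) := by
            rw [exp_le_exp]; nlinarith
    · exact tendsto_exp_atBot.comp (tendsto_linear_sub_exp |μ| (by positivity))
  have := integral_Ioi_of_hasDerivAt_of_tendsto (f := fun t => sinh (μ * t) * exp (-z * cosh t))
    (hderiv 0).continuousAt.continuousWithinAt (fun x _ => hderiv x) hint htend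
  simpa using this

lemma cosh_mul_le_exp (ν t : ℝ) (ht : 0 ≤ t) : cosh (ν * t) ≤ exp (|ν| * t) := by
  have := cosh_le_exp_abs (ν * t); rwa [abs_mul, abs_of_nonneg ht] at this

lemma abs_sinh_mul_le_exp (ν t : ℝ) (ht : 0 ≤ t) : |sinh (ν * t)| ≤ exp (|ν| * t) := by
  have := abs_sinh_le_exp_abs (ν * t); rwa [abs_mul, abs_of_nonneg ht] at this

/-- Integrability of `cosh t * exp(-z cosh t) * cosh (ν t)` type integrands. -/

lemma cosh_mul_integrand_integrable (ν : ℝ) {z : ℝ} (hz : 0 < z) :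
    IntegrableOn (fun t => cosh t * (exp (-z * cosh t) * cosh (ν * t))) (Ioi (0:ℝ)) := by
  refine integrableOn_of_le_exp_lin_sub_cosh hz (1 + |ν|) 1 (by continuity) (fun t ht => ?_)
  have ht' : (0:ℝ) < t := ht
  have h1 := cosh_mul_le_exp ν t ht'.le
  have h2 : cosh t ≤ exp t := by
    have := cosh_le_exp_abs t; rwa [abs_of_nonneg ht'.le] at this
  have hc := Real.cosh_pos t
  have hc2 := Real.cosh_pos (ν * t)
  rw [abs_of_nonneg (by positivity), one_mul]
  calc cosh t * (exp (-z * cosh t) * cosh (ν * t))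
      ≤ exp t * (exp (-z * cosh t) * exp (|ν| * t)) := by
        apply mul_le_mul h2 (mul_le_mul_of_nonneg_left h1 (exp_pos _).le) (by positivity) (exp_pos _).le
    _ = exp ((1 + |ν|) * t - z * cosh t) := by rw [← Real.exp_add, ← Real.exp_add]; ring_nf

/-- Integrability of `sinh t * sinh (ν t) * exp (-z cosh t)`. -/

lemma sinh_mul_integrand_integrable (ν : ℝ) {z : ℝ} (hz : 0 < z) :
    IntegrableOn (fun t => sinh t * sinh (ν * t) * exp (-z * cosh t)) (Ioi (0:ℝ)) := by
  refine integrableOn_of_le_exp_lin_sub_cosh hz (1 + |ν|) 1 (by continuity) (fun t ht => ?_)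
  have ht' : (0:ℝ) < t := ht
  have h1 := abs_sinh_mul_le_exp ν t ht'.le
  have h2 : |sinh t| ≤ exp t := by
    have := abs_sinh_le_exp_abs t; rwa [abs_of_nonneg ht'.le] at this
  rw [one_mul, abs_mul, abs_mul, abs_of_nonneg (exp_pos _).le]
  calc |sinh t| * |sinh (ν * t)| * exp (-z * cosh t)
      ≤ exp t * exp (|ν| * t) * exp (-z * cosh t) := by
        apply mul_le_mul_of_nonneg_right (mul_le_mul h2 h1 (abs_nonneg _) (exp_pos _).le) (exp_pos _).le
    _ = exp ((1 + |ν|) * t - z * cosh t) := by rw [← Real.exp_add, ← Real.exp_add]; ring_nf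

/-- Derivative of besselK. -/

lemma besselK_hasDerivAt (ν : ℝ) {z : ℝ} (hz : 0 < z) :
    HasDerivAt (besselK ν)
      (-∫ t in Ioi (0:ℝ), cosh t * (exp (-z * cosh t) * cosh (ν * t))) z := by
  have key := hasDerivAt_integral_of_dominated_loc_of_deriv_le (μ := volume.restrict (Ioi (0:ℝ)))
    (F := fun x t => exp (-x * cosh t) * cosh (ν * t))
    (F' := fun x t => -(cosh t * (exp (-x * cosh t) * cosh (ν * t))))
    (x₀ := z) (bound := fun t => cosh t * (exp (-(z/2) * cosh t) * cosh (ν * t)))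
    (s := ball z (z/2)) (ball_mem_nhds z (by positivity))
    (Eventually.of_forall fun x => (Continuous.aestronglyMeasurable (by continuity)).restrict)
    (besselK_integrand_integrable ν hz)
    (Continuous.aestronglyMeasurable (by continuity)).restrict
    ?_ ?_ ?_
  · have : (fun x => ∫ t in Ioi (0:ℝ), exp (-x * cosh t) * cosh (ν * t)) = besselK ν := rfl
    rw [← this]
    refine key.2.congr_deriv ?_
    rw [integral_neg]
  · -- bound
    filter_upwards [ae_restrict_mem measurableSet_Ioi] with t ht
    intro x hx
    have ht' : (0:ℝ) < t := ht
    have hc := Real.cosh_pos t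
    have hc2 := Real.cosh_pos (ν * t)
    have hge : z/2 ≤ x := by
      have := abs_lt.1 (mem_ball_iff_norm.1 hx)
      linarith [this.1]
    rw [Real.norm_eq_abs, abs_neg, abs_of_nonneg (by positivity)]
    have : exp (-x * cosh t) ≤ exp (-(z/2) * cosh t) := by
      rw [exp_le_exp]
      nlinarith
    nlinarith [mul_le_mul_of_nonneg_left this hc2.le]
  · -- bound integrable
    refine integrableOn_of_le_exp_lin_sub_cosh (by positivity : (0:ℝ) < z/2) (1 + |ν|) 1
      (by continuity) (fun t ht => ?_)
    have ht' : (0:ℝ) < t := ht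
    have h1 := cosh_mul_le_exp ν t ht'.le
    have h2 : cosh t ≤ exp t := by
      have := cosh_le_exp_abs t; rwa [abs_of_nonneg ht'.le] at this
    have hc := Real.cosh_pos t
    have hc2 := Real.cosh_pos (ν * t)
    rw [abs_of_nonneg (by positivity), one_mul]
    calc cosh t * (exp (-(z/2) * cosh t) * cosh (ν * t))
        ≤ exp t * (exp (-(z/2) * cosh t) * exp (|ν| * t)) := by
          apply mul_le_mul h2 (mul_le_mul_of_nonneg_left h1 (exp_pos _).le) (by positivity) (exp_pos _).le
      _ = exp ((1 + |ν|) * t - z/2 * cosh t) := by rw [← Real.exp_add, ← Real.exp_add]; ring_nf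
  · -- differentiability
    filter_upwards [ae_restrict_mem measurableSet_Ioi] with t _
    intro x _
    have hlin : HasDerivAt (fun x : ℝ => -x * cosh t) ((-1) * cosh t) x :=
      ((hasDerivAt_id x).neg).mul_const (cosh t)
    have h := (hlin.exp).mul_const (cosh (ν * t))
    refine h.congr_deriv ?_
    ring

/-- The derivative integral in terms of besselK. -/

lemma besselK_deriv_integral_eq (ν : ℝ) {z : ℝ} (hz : 0 < z) :
    ∫ t in Ioi (0:ℝ), cosh t * (exp (-z * cosh t) * cosh (ν * t))
      = (ν / z) * besselK ν z + besselK (ν - 1) z := by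
  have split : ∀ t : ℝ, cosh t * (exp (-z * cosh t) * cosh (ν * t))
      = sinh t * sinh (ν * t) * exp (-z * cosh t) + exp (-z * cosh t) * cosh ((ν - 1) * t) := by
    intro t
    have : cosh ((ν - 1) * t) = cosh (ν * t) * cosh t - sinh (ν * t) * sinh t := by
      rw [show (ν - 1) * t = ν * t - t by ring, Real.cosh_sub]
    rw [this]; ring
  rw [show (∫ t in Ioi (0:ℝ), cosh t * (exp (-z * cosh t) * cosh (ν * t)))
      = ∫ t in Ioi (0:ℝ), (sinh t * sinh (ν * t) * exp (-z * cosh t)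
          + exp (-z * cosh t) * cosh ((ν - 1) * t)) from
    setIntegral_congr_fun measurableSet_Ioi (fun t _ => split t)]
  rw [integral_add (sinh_mul_integrand_integrable ν hz) (besselK_integrand_integrable (ν - 1) hz)]
  have hid := besselK_ftc_identity ν hz
  have hsub : ∫ t in Ioi (0:ℝ), (ν * cosh (ν * t) - z * sinh t * sinh (ν * t)) * exp (-z * cosh t)
      = ν * besselK ν z - z * ∫ t in Ioi (0:ℝ), sinh t * sinh (ν * t) * exp (-z * cosh t) := by
    rw [show (fun t => (ν * cosh (ν * t) - z * sinh t * sinh (ν * t)) * exp (-z * cosh t))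
        = fun t => ν * (exp (-z * cosh t) * cosh (ν * t)) - z * (sinh t * sinh (ν * t) * exp (-z * cosh t)) from
      funext fun t => by ring]
    rw [integral_sub ((besselK_integrand_integrable ν hz).const_mul ν)
      ((sinh_mul_integrand_integrable ν hz).const_mul z), integral_const_mul, integral_const_mul]
    rfl
  rw [hsub] at hid
  have : ∫ t in Ioi (0:ℝ), sinh t * sinh (ν * t) * exp (-z * cosh t) = (ν / z) * besselK ν z := by
    rw [div_mul_eq_mul_div, eq_div_iff hz.ne']
    linarith
  rw [this]
  rfl

lemma hasDerivAt_rpow_mul_besselK (μ α : ℝ) {z : ℝ} (hz : 0 < z) :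
    HasDerivAt (fun z => z ^ α * besselK μ z)
      ((α - μ) * z ^ (α - 1) * besselK μ z - z ^ α * besselK (μ - 1) z) z := by
  have h1 : HasDerivAt (fun z : ℝ => z ^ α) (α * z ^ (α - 1)) z :=
    Real.hasDerivAt_rpow_const (Or.inl hz.ne')
  have h2 : HasDerivAt (besselK μ) (-((μ / z) * besselK μ z + besselK (μ - 1) z)) z := by
    have := besselK_hasDerivAt μ hz
    rwa [besselK_deriv_integral_eq μ hz] at this
  have h3 := h1.mul h2
  refine h3.congr_deriv ?_
  have hzz : z ^ (α - 1) = z ^ α / z := by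
    rw [Real.rpow_sub hz, Real.rpow_one]
  rw [hzz]
  field_simp
  ring

/-- Coefficients of the derivative expansion. -/

noncomputable def aa : ℕ → ℕ → ℝ
  | 0, 0 => 1
  | 0, _ + 1 => 0
  | n + 1, 0 => (0 - (n:ℝ)) * aa n 0
  | n + 1, k + 1 => ((2 * (k+1) : ℝ) - n) * aa n (k+1) - aa n k

lemma aa_eq_zero {n k : ℕ} (h : n < k) : aa n k = 0 := by
  induction n generalizing k with
  | zero => match k, h with
    | k + 1, _ => rfl
  | succ n ih =>
    match k, h with
    | k + 1, h =>
      have h1 : n < k + 1 := by omega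
      have h2 : n < k := by omega
      show ((2 * (k+1) : ℝ) - n) * aa n (k+1) - aa n k = 0
      rw [ih h1, ih h2]
      ring

lemma aa_zero_eq_zero {n : ℕ} (hn : 1 ≤ n) : aa n 0 = 0 := by
  induction n with
  | zero => omega
  | succ n ih =>
    show (0 - (n:ℝ)) * aa n 0 = 0
    rcases Nat.eq_zero_or_pos n with h | h
    · subst h; simp
    · rw [ih h]; ring

lemma aa_sum_step (n : ℕ) (f : ℕ → ℝ) :
    ∑ k ∈ Finset.range (n+2), aa (n+1) k * f k
      = ∑ k ∈ Finset.range (n+1), aa n k * (((2*(k:ℝ)) - n) * f k - f (k+1)) := by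
  have hh : ∀ k ∈ Finset.range (n+1), aa (n+1) (k+1) * f (k+1)
      = (((2*((k:ℝ)+1)) - n) * aa n (k+1) * f (k+1)) - aa n k * f (k+1) := by
    intro k _
    show (((2 * (k+1) : ℝ) - n) * aa n (k+1) - aa n k) * f (k+1) = _
    push_cast
    ring
  rw [Finset.sum_range_succ', Finset.sum_congr rfl hh, Finset.sum_sub_distrib]
  have h2 : ∀ k ∈ Finset.range (n+1), aa n k * (((2*(k:ℝ)) - n) * f k - f (k+1))
      = ((2*(k:ℝ)) - n) * aa n k * f k - aa n k * f (k+1) := fun k _ => by ring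
  rw [Finset.sum_congr rfl h2, Finset.sum_sub_distrib]
  have h3 : ∑ k ∈ Finset.range (n+1), ((2*((k:ℝ)+1)) - n) * aa n (k+1) * f (k+1)
      = ∑ k ∈ Finset.range (n+1), ((2*(k:ℝ)) - n) * aa n k * f k - aa (n+1) 0 * f 0 := by
    have h4 : ∑ k ∈ Finset.range (n+2), ((2*(k:ℝ)) - n) * aa n k * f k
        = (∑ k ∈ Finset.range (n+1), ((2*((k:ℝ)+1)) - n) * aa n (k+1) * f (k+1))
          + ((2*((0:ℕ):ℝ)) - n) * aa n 0 * f 0 := by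
      rw [Finset.sum_range_succ']
      congr 1
      apply Finset.sum_congr rfl
      intro k _
      push_cast
      ring
    have h5 : ∑ k ∈ Finset.range (n+2), ((2*(k:ℝ)) - n) * aa n k * f k
        = ∑ k ∈ Finset.range (n+1), ((2*(k:ℝ)) - n) * aa n k * f k := by
      rw [Finset.sum_range_succ, aa_eq_zero (by omega : n < n + 1)]
      ring
    have h6 : aa (n+1) 0 * f 0 = ((2*((0:ℕ):ℝ)) - n) * aa n 0 * f 0 := by
      show ((0 - (n:ℝ)) * aa n 0) * f 0 = _
      push_cast
      ring
    rw [h6]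
    linarith [h4, h5]
  rw [h3]
  ring

/-- The function appearing as the n-th derivative of `z ^ s * besselK s z`. -/

noncomputable def Phi (s : ℝ) (n : ℕ) (z : ℝ) : ℝ :=
  ∑ k ∈ Finset.range (n + 1), aa n k * (z ^ (s + k - n) * besselK (s - k) z)

lemma hasDerivAt_Phi (s : ℝ) (n : ℕ) {z : ℝ} (hz : 0 < z) :
    HasDerivAt (Phi s n) (Phi s (n + 1) z) z := by
  have hterm : ∀ k ∈ Finset.range (n + 1), HasDerivAt
      (fun z => aa n k * (z ^ (s + k - n) * besselK (s - k) z))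
      (aa n k * (((2 * k : ℝ) - n) * (z ^ (s + k - (n+1)) * besselK (s - k) z)
        - z ^ (s + (k+1) - (n+1)) * besselK (s - (k+1)) z)) z := by
    intro k _
    have h := (hasDerivAt_rpow_mul_besselK (s - k) (s + k - n) hz).const_mul (aa n k)
    refine h.congr_deriv ?_
    have e1 : s + (k:ℝ) - n - (s - k) = (2 * k : ℝ) - n := by ring
    have e2 : s + (k:ℝ) - (n+1) = s + k - n - 1 := by ring
    have e3 : s + ((k:ℝ)+1) - (n+1) = s + k - n := by ring
    have e4 : s - (k:ℝ) - 1 = s - ((k:ℝ)+1) := by ring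
    rw [e1, e2, e3, e4]
    push_cast
    ring
  have hsum := HasDerivAt.fun_sum hterm
  refine hsum.congr_deriv (Eq.symm ?_)
  show Phi s (n+1) z = _
  unfold Phi
  have key := aa_sum_step n (fun k => z ^ (s + k - ((n:ℝ)+1)) * besselK (s - k) z)
  push_cast
  push_cast at key
  convert key using 2

lemma exp_image_Ioi : Real.exp '' (Ioi (0:ℝ)) = Ioi 1 := by
  ext u
  constructor
  · rintro ⟨t, ht, rfl⟩
    rw [← Real.exp_zero]; exact Real.exp_lt_exp.mpr ht
  · intro hu
    exact ⟨Real.log u, Real.log_pos hu, Real.exp_log (by linarith [mem_Ioi.1 hu])⟩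

lemma integrableOn_gamma_integrand {ν a : ℝ} (hν : 0 < ν) (ha : 0 < a) :
    IntegrableOn (fun u : ℝ => u ^ (ν - 1) * exp (-(a * u))) (Ioi (0:ℝ)) := by
  have := integrableOn_rpow_mul_exp_neg_mul_rpow (p := 1) (s := ν - 1) (b := a)
    (by linarith) one_pos ha
  simpa [Real.rpow_one, neg_mul] using this

/-- The key Gamma-type integral bound. -/

lemma integral_exp_lin_sub_exp_le {ν a : ℝ} (hν : 0 < ν) (ha : 0 < a) :
    ∫ t in Ioi (0:ℝ), exp (ν * t - a * exp t) ≤ (1/a) ^ ν * Real.Gamma ν := by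
  have himg := integral_image_eq_integral_abs_deriv_smul (s := Ioi (0:ℝ)) measurableSet_Ioi
    (f' := Real.exp) (fun x _ => (Real.hasDerivAt_exp x).hasDerivWithinAt)
    (Real.exp_injective.injOn) (fun u : ℝ => u ^ (ν - 1) * exp (-(a * u)))
  rw [exp_image_Ioi] at himg
  have heq : ∫ t in Ioi (0:ℝ), exp (ν * t - a * exp t)
      = ∫ u in Ioi (1:ℝ), u ^ (ν - 1) * exp (-(a * u)) := by
    rw [himg]
    apply setIntegral_congr_fun measurableSet_Ioi
    intro t _
    have h1 : (exp t) ^ (ν - 1) = exp (t * (ν - 1)) := by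
      rw [Real.rpow_def_of_pos (exp_pos t), Real.log_exp]
    simp only [smul_eq_mul, Real.norm_eq_abs, abs_of_nonneg (exp_pos t).le]
    rw [h1, ← Real.exp_add, ← Real.exp_add]
    ring_nf
  rw [heq]
  have hmono : ∫ u in Ioi (1:ℝ), u ^ (ν - 1) * exp (-(a * u))
      ≤ ∫ u in Ioi (0:ℝ), u ^ (ν - 1) * exp (-(a * u)) := by
    apply setIntegral_mono_set (integrableOn_gamma_integrand hν ha)
    · filter_upwards [ae_restrict_mem measurableSet_Ioi] with u hu
      have : (0:ℝ) < u := hu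
      positivity
    · exact HasSubset.Subset.eventuallyLE (by intro x hx; exact lt_trans one_pos (mem_Ioi.1 hx))
  exact hmono.trans_eq (integral_rpow_mul_exp_neg_mul_Ioi hν ha)

lemma Gamma_nat_sub_le {s : ℝ} (hs : s ∈ Set.Ioo (0:ℝ) 1) (k : ℕ) :
    Real.Gamma ((k:ℝ) + 1 - s) ≤ Real.Gamma (1 - s) * (k.factorial : ℝ) := by
  induction k with
  | zero => simp
  | succ k ih =>
    have hpos : (0:ℝ) < (k:ℝ) + 1 - s := by
      have := hs.2; have : s < 1 := hs.2; have : (0:ℕ) ≤ k := Nat.zero_le k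
      push_cast
      nlinarith [Nat.cast_nonneg (α := ℝ) k, hs.2]
    have heq : ((k+1:ℕ):ℝ) + 1 - s = ((k:ℝ) + 1 - s) + 1 := by push_cast; ring
    rw [heq, Real.Gamma_add_one hpos.ne']
    have hG : (0:ℝ) ≤ Real.Gamma ((k:ℝ) + 1 - s) := (Real.Gamma_pos_of_pos hpos).le
    calc ((k:ℝ) + 1 - s) * Real.Gamma ((k:ℝ) + 1 - s)
        ≤ ((k:ℝ) + 1) * (Real.Gamma (1-s) * k.factorial) := by
          apply mul_le_mul (by linarith [hs.1]) ih hG (by positivity)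
      _ = Real.Gamma (1-s) * ((k+1:ℕ).factorial : ℝ) := by
          rw [Nat.factorial_succ]; push_cast; ring

lemma integrableOn_exp_lin_sub_half_exp {ν z : ℝ} (hz : 0 < z) :
    IntegrableOn (fun t => exp (ν * t - z * exp t)) (Ioi (0:ℝ)) := by
  refine integrableOn_of_le_exp_lin_sub_cosh hz ν 1 (by continuity) (fun t ht => ?_)
  rw [abs_of_nonneg (exp_pos _).le, one_mul, exp_le_exp]
  have h : cosh t ≤ exp |t| := cosh_le_exp_abs t
  have ht' : (0:ℝ) < t := ht
  rw [abs_of_nonneg ht'.le] at h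
  nlinarith

/-- Core analytic bound on Bessel terms. -/

lemma besselK_term_bound {s : ℝ} (hs : s ∈ Set.Ioo (0:ℝ) 1) {r : ℝ} (hr : r ∈ Set.Icc (0:ℝ) 1)
    {z : ℝ} (hz : 0 < z) {k : ℕ} (hk : 1 ≤ k) :
    z ^ (s + k) * besselK (s - k) z
      ≤ Real.Gamma (1 - s) * (k.factorial : ℝ) * 4 ^ k * z ^ (2 * s - r) := by
  set ν : ℝ := (k:ℝ) - s with hν
  have hν0 : 0 < ν := by
    have : (1:ℝ) ≤ (k:ℝ) := by exact_mod_cast hk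
    simp only [hν]; linarith [hs.2]
  have hGν : Real.Gamma ν ≤ Real.Gamma (1 - s) * (k.factorial : ℝ) := by
    obtain ⟨m, rfl⟩ : ∃ m, k = m + 1 := ⟨k - 1, by omega⟩
    have : ν = (m:ℝ) + 1 - s := by simp only [hν]; push_cast; ring
    rw [this]
    refine (Gamma_nat_sub_le hs m).trans ?_
    have : (m.factorial : ℝ) ≤ ((m+1).factorial : ℝ) := by
      exact_mod_cast Nat.factorial_le (by omega)
    nlinarith [Real.Gamma_pos_of_pos (by linarith [hs.2] : (0:ℝ) < 1 - s)]
  -- step 1 : besselK (s - k) z ≤ ∫ exp (ν t - z cosh t)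
  have hb1 : besselK (s - k) z ≤ ∫ t in Ioi (0:ℝ), exp (ν * t - z * cosh t) := by
    apply setIntegral_mono_on (besselK_integrand_integrable _ hz)
      (integrableOn_of_le_exp_lin_sub_cosh hz ν 1 (by continuity)
        (fun t ht => by rw [abs_of_nonneg (exp_pos _).le, one_mul])) measurableSet_Ioi
    intro t ht
    have ht' : (0:ℝ) < t := ht
    have h1 : cosh ((s - (k:ℝ)) * t) = cosh (ν * t) := by
      rw [show (s - (k:ℝ)) * t = -(ν * t) by simp only [hν]; ring, Real.cosh_neg]
    have h2 : cosh (ν * t) ≤ exp (ν * t) := by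
      have := cosh_le_exp_abs (ν * t)
      rwa [abs_of_nonneg (by positivity : (0:ℝ) ≤ ν * t)] at this
    rw [h1, show ν * t - z * cosh t = -z * cosh t + ν * t by ring, Real.exp_add]
    exact mul_le_mul_of_nonneg_left h2 (exp_pos _).le
  have hzk : (0:ℝ) < z ^ (s + (k:ℝ)) := Real.rpow_pos_of_pos hz _
  have hKnn : 0 ≤ besselK (s - k) z := by
    apply setIntegral_nonneg measurableSet_Ioi; intro t _; positivity
  have h4k : (2:ℝ) ^ ν ≤ 4 ^ k ∧ (4:ℝ) ^ ν ≤ 4 ^ k := by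
    constructor
    · calc (2:ℝ) ^ ν ≤ (2:ℝ) ^ (k:ℝ) :=
            Real.rpow_le_rpow_of_exponent_le one_le_two (by simp only [hν]; linarith [hs.1])
        _ = (2:ℝ) ^ k := by rw [Real.rpow_natCast]
        _ ≤ 4 ^ k := pow_le_pow_left₀ (by norm_num) (by norm_num) k
    · calc (4:ℝ) ^ ν ≤ (4:ℝ) ^ (k:ℝ) :=
            Real.rpow_le_rpow_of_exponent_le (by norm_num) (by simp only [hν]; linarith [hs.1])
        _ = (4:ℝ) ^ k := by rw [Real.rpow_natCast]
  have hGν0 : 0 ≤ Real.Gamma ν := (Real.Gamma_pos_of_pos hν0).le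
  have hG1 : (0:ℝ) < Real.Gamma (1 - s) := Real.Gamma_pos_of_pos (by linarith [hs.2])
  rcases le_or_gt z 1 with hz1 | hz1
  · -- small z case
    have hb2 : ∫ t in Ioi (0:ℝ), exp (ν * t - z * cosh t)
        ≤ ∫ t in Ioi (0:ℝ), exp (ν * t - (z/2) * exp t) := by
      apply setIntegral_mono_on (integrableOn_of_le_exp_lin_sub_cosh hz ν 1 (by continuity)
          (fun t ht => by rw [abs_of_nonneg (exp_pos _).le, one_mul]))
        (integrableOn_exp_lin_sub_half_exp (by positivity)) measurableSet_Ioi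
      intro t _
      rw [exp_le_exp]
      have := half_exp_le_cosh t
      nlinarith
    have hb3 := integral_exp_lin_sub_exp_le hν0 (by positivity : (0:ℝ) < z/2)
    have hchain : besselK (s - k) z ≤ (1/(z/2)) ^ ν * Real.Gamma ν :=
      hb1.trans (hb2.trans hb3)
    have hzz : z ^ (s + (k:ℝ)) / z ^ ν = z ^ (2*s) := by
      rw [← Real.rpow_sub hz]; congr 1; simp only [hν]; ring
    have halg : z ^ (s + (k:ℝ)) * ((1/(z/2)) ^ ν * Real.Gamma ν)
        = 2 ^ ν * Real.Gamma ν * z ^ (2*s) := by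
      rw [one_div_div, Real.div_rpow (by norm_num) hz.le, ← hzz]
      ring
    have hrz : z ^ (2*s) ≤ z ^ (2*s - r) :=
      Real.rpow_le_rpow_of_exponent_ge hz hz1 (by linarith [hr.1])
    calc z ^ (s + (k:ℝ)) * besselK (s - k) z
        ≤ z ^ (s + (k:ℝ)) * ((1/(z/2)) ^ ν * Real.Gamma ν) :=
          mul_le_mul_of_nonneg_left hchain hzk.le
      _ = 2 ^ ν * Real.Gamma ν * z ^ (2*s) := halg
      _ ≤ 4 ^ k * (Real.Gamma (1-s) * k.factorial) * z ^ (2*s - r) := by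
          apply mul_le_mul (mul_le_mul h4k.1 hGν hGν0 (by positivity)) hrz
            (Real.rpow_nonneg hz.le _)
            (mul_nonneg (by positivity) (mul_nonneg hG1.le (by positivity)))
      _ = Real.Gamma (1 - s) * (k.factorial : ℝ) * 4 ^ k * z ^ (2 * s - r) := by ring
  · -- large z case
    have hb2 : ∫ t in Ioi (0:ℝ), exp (ν * t - z * cosh t)
        ≤ exp (-z/2) * ∫ t in Ioi (0:ℝ), exp (ν * t - (z/4) * exp t) := by
      rw [← integral_const_mul]
      apply setIntegral_mono_on (integrableOn_of_le_exp_lin_sub_cosh hz ν 1 (by continuity)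
          (fun t ht => by rw [abs_of_nonneg (exp_pos _).le, one_mul]))
        ((integrableOn_exp_lin_sub_half_exp (by positivity)).const_mul _) measurableSet_Ioi
      intro t ht
      have ht' : (0:ℝ) < t := ht
      rw [← Real.exp_add, exp_le_exp]
      have := cosh_lower t ht'.le
      nlinarith
    have hb3 := integral_exp_lin_sub_exp_le hν0 (by positivity : (0:ℝ) < z/4)
    have hchain : besselK (s - k) z ≤ exp (-z/2) * ((1/(z/4)) ^ ν * Real.Gamma ν) := by
      refine hb1.trans (hb2.trans ?_)
      exact mul_le_mul_of_nonneg_left hb3 (exp_pos _).le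
    have hzz : z ^ (s + (k:ℝ)) / z ^ ν = z ^ (2*s) := by
      rw [← Real.rpow_sub hz]; congr 1; simp only [hν]; ring
    have halg : z ^ (s + (k:ℝ)) * (exp (-z/2) * ((1/(z/4)) ^ ν * Real.Gamma ν))
        = 4 ^ ν * Real.Gamma ν * (z ^ (2*s) * exp (-z/2)) := by
      rw [one_div_div, Real.div_rpow (by norm_num) hz.le, ← hzz]
      ring
    have hdecay : z ^ (2*s) * exp (-z/2) ≤ z ^ (2*s - r) := by
      have h1 : z * exp (-z/2) ≤ 1 := by
        have h2 := add_one_le_exp (z/4)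
        have h3 : exp (z/4) * exp (z/4) = exp (z/2) := by rw [← Real.exp_add]; ring_nf
        have h4 : z ≤ exp (z/2) := by nlinarith [sq_nonneg (1 - z/4)]
        have h5 : exp (-z/2) = (exp (z/2))⁻¹ := by rw [← Real.exp_neg]; ring_nf
        rw [h5, mul_inv_le_iff₀ (exp_pos _), one_mul]
        exact h4
      have h6 : z ^ (2*s) * exp (-z/2) = z ^ (2*s - 1) * (z * exp (-z/2)) := by
        rw [← mul_assoc, ← Real.rpow_add_one hz.ne']; ring_nf
      have h7 : z ^ (2*s) * exp (-z/2) ≤ z ^ (2*s-1) := by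
        rw [h6]
        calc z ^ (2*s-1) * (z * exp (-z/2)) ≤ z ^ (2*s-1) * 1 :=
              mul_le_mul_of_nonneg_left h1 (Real.rpow_nonneg hz.le _)
          _ = z ^ (2*s-1) := mul_one _
      refine h7.trans (Real.rpow_le_rpow_of_exponent_le hz1.le (by linarith [hr.2]))
    calc z ^ (s + (k:ℝ)) * besselK (s - k) z
        ≤ z ^ (s + (k:ℝ)) * (exp (-z/2) * ((1/(z/4)) ^ ν * Real.Gamma ν)) :=
          mul_le_mul_of_nonneg_left hchain hzk.le
      _ = 4 ^ ν * Real.Gamma ν * (z ^ (2*s) * exp (-z/2)) := halg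
      _ ≤ 4 ^ k * (Real.Gamma (1-s) * k.factorial) * z ^ (2*s - r) := by
          apply mul_le_mul (mul_le_mul h4k.2 hGν hGν0 (by positivity)) hdecay
            (by positivity)
            (mul_nonneg (by positivity) (mul_nonneg hG1.le (by positivity)))
      _ = Real.Gamma (1 - s) * (k.factorial : ℝ) * 4 ^ k * z ^ (2 * s - r) := by ring

noncomputable def TT (n : ℕ) : ℝ := ∑ k ∈ Finset.range (n+1), |aa n k| * 4 ^ k * (k.factorial : ℝ)

lemma TT_nonneg (n : ℕ) : 0 ≤ TT n := by
  apply Finset.sum_nonneg; intro k _; positivity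

lemma TT_le (n : ℕ) : TT n ≤ 6 ^ n * (n.factorial : ℝ) := by
  induction n with
  | zero => simp [TT, aa]
  | succ n ih =>
    have key : TT (n+1) ≤ 6 * (n+1) * TT n := by
      unfold TT
      rw [Finset.sum_range_succ']
      have hterm : ∀ k ∈ Finset.range (n+1),
          |aa (n+1) (k+1)| * 4 ^ (k+1) * ((k+1).factorial : ℝ)
            ≤ ((n:ℝ)+2) * (|aa n (k+1)| * 4 ^ (k+1) * ((k+1).factorial : ℝ))
              + 4 * ((n:ℝ)+1) * (|aa n k| * 4 ^ k * (k.factorial : ℝ)) := by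
        intro k hk
        have hk' : k ≤ n := by simpa using Nat.lt_succ_iff.1 (Finset.mem_range.1 hk)
        have habs : |aa (n+1) (k+1)| ≤ ((n:ℝ)+2) * |aa n (k+1)| + |aa n k| := by
          show |((2 * (k+1) : ℝ) - n) * aa n (k+1) - aa n k| ≤ _
          refine (abs_sub _ _).trans ?_
          rw [abs_mul]
          have hco : |(2 * ((k:ℝ)+1)) - n| ≤ (n:ℝ)+2 := by
            rw [abs_le]
            constructor
            · have : (k:ℝ) ≥ 0 := Nat.cast_nonneg k
              nlinarith
            · have : (k:ℝ) ≤ n := Nat.cast_le.2 hk'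
              nlinarith
          have := mul_le_mul_of_nonneg_right hco (abs_nonneg (aa n (k+1)))
          linarith
        have hfac : ((k+1).factorial : ℝ) = ((k:ℝ)+1) * (k.factorial : ℝ) := by
          rw [Nat.factorial_succ]; push_cast; ring
        have hfle : ((k:ℝ)+1) ≤ (n:ℝ)+1 := by
          have : (k:ℝ) ≤ n := Nat.cast_le.2 hk'
          linarith
        calc |aa (n+1) (k+1)| * 4 ^ (k+1) * ((k+1).factorial : ℝ)
            ≤ (((n:ℝ)+2) * |aa n (k+1)| + |aa n k|) * 4 ^ (k+1) * ((k+1).factorial : ℝ) := by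
              apply mul_le_mul_of_nonneg_right (mul_le_mul_of_nonneg_right habs (by positivity)) (by positivity)
          _ = ((n:ℝ)+2) * (|aa n (k+1)| * 4 ^ (k+1) * ((k+1).factorial : ℝ))
              + |aa n k| * 4 ^ (k+1) * ((k+1).factorial : ℝ) := by ring
          _ ≤ ((n:ℝ)+2) * (|aa n (k+1)| * 4 ^ (k+1) * ((k+1).factorial : ℝ))
              + 4 * ((n:ℝ)+1) * (|aa n k| * 4 ^ k * (k.factorial : ℝ)) := by
              have : |aa n k| * 4 ^ (k+1) * ((k+1).factorial : ℝ)
                  ≤ 4 * ((n:ℝ)+1) * (|aa n k| * 4 ^ k * (k.factorial : ℝ)) := by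
                rw [hfac, pow_succ]
                have h0 : (0:ℝ) ≤ |aa n k| * 4 ^ k * (k.factorial : ℝ) := by positivity
                calc |aa n k| * (4 ^ k * 4) * (((k:ℝ)+1) * (k.factorial : ℝ))
                    ≤ |aa n k| * (4 ^ k * 4) * (((n:ℝ)+1) * (k.factorial : ℝ)) := by
                      apply mul_le_mul_of_nonneg_left
                        (mul_le_mul_of_nonneg_right hfle (by positivity)) (by positivity)
                  _ = 4 * ((n:ℝ)+1) * (|aa n k| * 4 ^ k * (k.factorial : ℝ)) := by ring
              linarith
      have hsum1 : ∑ k ∈ Finset.range (n+1), |aa n (k+1)| * 4 ^ (k+1) * ((k+1).factorial : ℝ) ≤ TT n := by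
        have : ∑ k ∈ Finset.range (n+2), |aa n k| * 4 ^ k * (k.factorial : ℝ)
            = (∑ k ∈ Finset.range (n+1), |aa n (k+1)| * 4 ^ (k+1) * ((k+1).factorial : ℝ))
              + |aa n 0| * 4 ^ 0 * (Nat.factorial 0 : ℝ) := Finset.sum_range_succ' _ _
        have h2 : ∑ k ∈ Finset.range (n+2), |aa n k| * 4 ^ k * (k.factorial : ℝ) = TT n := by
          unfold TT
          rw [Finset.sum_range_succ, aa_eq_zero (by omega : n < n+1)]
          simp
        rw [h2] at this
        have h3 : (0:ℝ) ≤ |aa n 0| * 4 ^ 0 * (Nat.factorial 0 : ℝ) := by positivity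
        linarith
      have hzero : |aa (n+1) 0| * 4 ^ 0 * (Nat.factorial 0 : ℝ) ≤ (n:ℝ) * TT n := by
        have : |aa (n+1) 0| = (n:ℝ) * |aa n 0| := by
          show |(0 - (n:ℝ)) * aa n 0| = _
          rw [abs_mul, abs_of_nonpos (by simp : (0:ℝ) - n ≤ 0)]
          ring_nf
        rw [this]
        simp only [pow_zero, Nat.factorial_zero, Nat.cast_one, mul_one]
        have h4 : |aa n 0| ≤ TT n := by
          have h5 : |aa n 0| * 4 ^ 0 * (Nat.factorial 0 : ℝ) ≤ TT n := by
            apply Finset.single_le_sum (f := fun k => |aa n k| * 4 ^ k * (k.factorial : ℝ))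
              (fun k _ => by positivity) (Finset.mem_range.2 (by omega))
          simpa using h5
        exact mul_le_mul_of_nonneg_left h4 (Nat.cast_nonneg n)
      calc (∑ k ∈ Finset.range (n+1), |aa (n+1) (k+1)| * 4 ^ (k+1) * ((k+1).factorial : ℝ))
            + |aa (n+1) 0| * 4 ^ 0 * (Nat.factorial 0 : ℝ)
          ≤ (∑ k ∈ Finset.range (n+1), (((n:ℝ)+2) * (|aa n (k+1)| * 4 ^ (k+1) * ((k+1).factorial : ℝ))
              + 4 * ((n:ℝ)+1) * (|aa n k| * 4 ^ k * (k.factorial : ℝ)))) + (n:ℝ) * TT n := by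
            exact add_le_add (Finset.sum_le_sum hterm) hzero
        _ = ((n:ℝ)+2) * (∑ k ∈ Finset.range (n+1), |aa n (k+1)| * 4 ^ (k+1) * ((k+1).factorial : ℝ))
              + 4 * ((n:ℝ)+1) * TT n + (n:ℝ) * TT n := by
            rw [Finset.sum_add_distrib, ← Finset.mul_sum, ← Finset.mul_sum]
            rfl
        _ ≤ ((n:ℝ)+2) * TT n + 4 * ((n:ℝ)+1) * TT n + (n:ℝ) * TT n := by
            have := mul_le_mul_of_nonneg_left hsum1 (by positivity : (0:ℝ) ≤ (n:ℝ)+2)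
            linarith
        _ = (6 * (n:ℝ) + 6) * TT n := by ring
        _ = 6 * ((n:ℝ)+1) * TT n := by ring
    have h6 : 6 * ((n:ℝ)+1) * TT n ≤ 6 * ((n:ℝ)+1) * (6 ^ n * (n.factorial : ℝ)) := by
      apply mul_le_mul_of_nonneg_left ih (by positivity)
    calc TT (n+1) ≤ 6 * ((n:ℝ)+1) * TT n := key
      _ ≤ 6 * ((n:ℝ)+1) * (6 ^ n * (n.factorial : ℝ)) := h6
      _ = 6 ^ (n+1) * ((n+1).factorial : ℝ) := by
          rw [Nat.factorial_succ, pow_succ]; push_cast; ring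

/-- Bound on the derivatives of the scaled function
`ψ_{s,λ}(y) = ψ_s(√λ · y)`. -/
theorem scaled_psi_deriv_bound (s : ℝ) (hs : s ∈ Set.Ioo (0:ℝ) 1) :
    ∃ c > 0, ∀ r ∈ Set.Icc (0:ℝ) 1, ∀ l : ℝ, 0 < l → ∀ y : ℝ, 0 < y →
      ∀ n : ℕ, 1 ≤ n →
      |y ^ n * iteratedDerivWithin n (fun t : ℝ => psi s (Real.sqrt l * t))
          (Set.Ioi (0:ℝ)) y| ≤
        c * 8 ^ n * (n.factorial : ℝ) * l ^ (s - r / 2) * y ^ (2 * s - r) := by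
  obtain ⟨hs0, hs1⟩ := hs
  set cs : ℝ := 2 ^ (1 - s) / Real.Gamma s with hcs_def
  have hGs : 0 < Real.Gamma s := Real.Gamma_pos_of_pos hs0
  have hcs : 0 < cs := div_pos (Real.rpow_pos_of_pos two_pos _) hGs
  have hG1 : (0:ℝ) < Real.Gamma (1 - s) := Real.Gamma_pos_of_pos (by linarith)
  refine ⟨cs * Real.Gamma (1 - s), by positivity, ?_⟩
  intro r hr l hl y hy n hn
  have hsl : 0 < Real.sqrt l := Real.sqrt_pos.2 hl
  -- Step 1: identification of the iterated derivative
  have hlem : ∀ m : ℕ, ∀ x : ℝ, 0 < x →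
      iteratedDeriv m (fun t : ℝ => psi s (Real.sqrt l * t)) x
        = cs * (Real.sqrt l) ^ m * Phi s m (Real.sqrt l * x) := by
    intro m
    induction m with
    | zero =>
      intro x hx
      simp only [iteratedDeriv_zero, pow_zero, mul_one]
      unfold psi Phi
      simp [aa, mul_assoc]
      exact Or.inl rfl
    | succ m ih =>
      intro x hx
      rw [iteratedDeriv_succ]
      have hev : iteratedDeriv m (fun t : ℝ => psi s (Real.sqrt l * t))
          =ᶠ[𝓝 x] fun x' => cs * (Real.sqrt l) ^ m * Phi s m (Real.sqrt l * x') := by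
        filter_upwards [isOpen_Ioi.mem_nhds (mem_Ioi.2 hx)] with x' hx'
        exact ih x' hx'
      rw [hev.deriv_eq]
      have hzx : 0 < Real.sqrt l * x := by positivity
      have hinner : HasDerivAt (fun x' : ℝ => Real.sqrt l * x') (Real.sqrt l) x := by
        simpa using (hasDerivAt_id x).const_mul (Real.sqrt l)
      have hcomp : HasDerivAt (fun x' : ℝ => Phi s m (Real.sqrt l * x'))
          (Phi s (m+1) (Real.sqrt l * x) * Real.sqrt l) x :=
        (hasDerivAt_Phi s m hzx).comp x hinner
      have := (hcomp.const_mul (cs * (Real.sqrt l) ^ m)).deriv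
      rw [this]
      ring
  -- Step 2: within = global
  have hwithin : iteratedDerivWithin n (fun t : ℝ => psi s (Real.sqrt l * t)) (Set.Ioi 0) y
      = iteratedDeriv n (fun t : ℝ => psi s (Real.sqrt l * t)) y := by
    rw [iteratedDerivWithin, iteratedDeriv, iteratedFDerivWithin_of_isOpen n isOpen_Ioi (mem_Ioi.2 hy)]
  set z := Real.sqrt l * y with hz_def
  have hz : 0 < z := by positivity
  rw [hwithin, hlem n y hy]
  -- Step 3: the bound
  have hrw : y ^ n * (cs * (Real.sqrt l) ^ n * Phi s n z) = cs * ((z ^ n) * Phi s n z) := by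
    rw [hz_def, mul_pow]; ring
  rw [hrw, abs_mul, abs_of_pos hcs, abs_mul, abs_of_nonneg (pow_nonneg hz.le n)]
  have habs : |Phi s n z| ≤ ∑ k ∈ Finset.range (n+1), |aa n k| * (z ^ (s + k - n) * besselK (s - k) z) := by
    refine (Finset.abs_sum_le_sum_abs _ _).trans ?_
    apply Finset.sum_le_sum
    intro k _
    rw [abs_mul, abs_of_nonneg (mul_nonneg (Real.rpow_nonneg hz.le _) (besselK_nonneg _ _))]
  have hstep : z ^ n * |Phi s n z|
      ≤ ∑ k ∈ Finset.range (n+1), |aa n k| * (z ^ (s + k) * besselK (s - k) z) := by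
    calc z ^ n * |Phi s n z|
        ≤ z ^ n * ∑ k ∈ Finset.range (n+1), |aa n k| * (z ^ (s + k - n) * besselK (s - k) z) :=
          mul_le_mul_of_nonneg_left habs (pow_nonneg hz.le n)
      _ = ∑ k ∈ Finset.range (n+1), |aa n k| * (z ^ (s + k) * besselK (s - k) z) := by
          rw [Finset.mul_sum]
          apply Finset.sum_congr rfl
          intro k _
          rw [show z ^ n * (|aa n k| * (z ^ (s + (k:ℝ) - n) * besselK (s - k) z))
              = |aa n k| * ((z ^ n * z ^ (s + (k:ℝ) - n)) * besselK (s - k) z) by ring]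
          congr 2
          rw [← Real.rpow_natCast z n, ← Real.rpow_add hz]
          congr 1
          ring
  have hterm : ∀ k ∈ Finset.range (n+1),
      |aa n k| * (z ^ (s + k) * besselK (s - k) z)
        ≤ (Real.Gamma (1-s) * z ^ (2*s - r)) * (|aa n k| * 4 ^ k * (k.factorial : ℝ)) := by
    intro k _
    match k with
    | 0 =>
      rw [aa_zero_eq_zero hn]
      simp only [abs_zero, zero_mul, mul_zero]
      positivity
    | k + 1 =>
      have hb := besselK_term_bound ⟨hs0, hs1⟩ hr hz (Nat.le_add_left 1 k)
      calc |aa n (k+1)| * (z ^ (s + (k+1:ℕ)) * besselK (s - (k+1:ℕ)) z)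
          ≤ |aa n (k+1)| * (Real.Gamma (1 - s) * ((k+1).factorial : ℝ) * 4 ^ (k+1) * z ^ (2 * s - r)) :=
            mul_le_mul_of_nonneg_left hb (abs_nonneg _)
        _ = (Real.Gamma (1-s) * z ^ (2*s - r)) * (|aa n (k+1)| * 4 ^ (k+1) * ((k+1).factorial : ℝ)) := by
            ring
  have hsum : ∑ k ∈ Finset.range (n+1), |aa n k| * (z ^ (s + k) * besselK (s - k) z)
      ≤ (Real.Gamma (1-s) * z ^ (2*s - r)) * TT n := by
    rw [TT, Finset.mul_sum]
    exact Finset.sum_le_sum hterm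
  have hTT : (Real.Gamma (1-s) * z ^ (2*s - r)) * TT n
      ≤ (Real.Gamma (1-s) * z ^ (2*s - r)) * (8 ^ n * (n.factorial : ℝ)) := by
    apply mul_le_mul_of_nonneg_left _ (by positivity)
    refine (TT_le n).trans ?_
    have : (6:ℝ) ^ n ≤ 8 ^ n := pow_le_pow_left₀ (by norm_num) (by norm_num) n
    exact mul_le_mul_of_nonneg_right this (Nat.cast_nonneg _)
  have hzrw : z ^ (2*s - r) = l ^ (s - r/2) * y ^ (2*s - r) := by
    rw [hz_def, Real.mul_rpow hsl.le hy.le]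
    congr 1
    rw [Real.sqrt_eq_rpow, ← Real.rpow_mul hl.le]
    congr 1; ring
  calc cs * (z ^ n * |Phi s n z|)
      ≤ cs * ((Real.Gamma (1-s) * z ^ (2*s - r)) * (8 ^ n * (n.factorial : ℝ))) := by
        apply mul_le_mul_of_nonneg_left (hstep.trans (hsum.trans hTT)) hcs.le
    _ = cs * Real.Gamma (1-s) * 8 ^ n * (n.factorial : ℝ) * l ^ (s - r/2) * y ^ (2*s - r) := by
        rw [hzrw]; ring
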